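/- Let H be a complex Hilbert space and φ : B(H) → B(H) a bijection preserving the Douglas solution in both directions. Then for every B, ker B = {0} if and only if ker φ(B) = {0}. -/

import Mathlib

lemma orth_top_eq_bot {H : Type*} [NormedAddCommGroup H] [InnerProductSpace ℂ H]
    (K : Submodule ℂ H) (h : Kᗮ = ⊤) : K = ⊥ := by
  have := Submodule.le_orthogonal_orthogonal K
  rw [h, Submodule.top_orthogonal_eq_bot] at this
  exact le_bot_iff.mp this

theorem douglas_preserver_preserves_injectivity
    {H : Type*} [NormedAddCommGroup H] [InnerProductSpace ℂ H] [CompleteSpace H]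
    (φ : (H →L[ℂ] H) → (H →L[ℂ] H))
    (hbij : Function.Bijective φ)
    (hφ : ∀ A B X : H →L[ℂ] H,
      (A = B ∘L X ∧ LinearMap.range (X : H →ₗ[ℂ] H) ≤ (LinearMap.ker (B : H →ₗ[ℂ] H))ᗮ) ↔
        (φ A = φ B ∘L φ X ∧ LinearMap.range (φ X : H →ₗ[ℂ] H) ≤ (LinearMap.ker (φ B : H →ₗ[ℂ] H))ᗮ)) :
    ∀ B : H →L[ℂ] H, LinearMap.ker (B : H →ₗ[ℂ] H) = ⊥ ↔ LinearMap.ker (φ B : H →ₗ[ℂ] H) = ⊥ := by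
  intro B
  have hid : LinearMap.range ((ContinuousLinearMap.id ℂ H : H →L[ℂ] H) : H →ₗ[ℂ] H) = (⊤ : Submodule ℂ H) := by
    ext x; simp
  constructor
  · intro hB
    -- (ker B)ᗮ = ⊤
    have horth : (LinearMap.ker (B : H →ₗ[ℂ] H))ᗮ = ⊤ := by
      rw [hB, Submodule.bot_orthogonal_eq_top]
    -- pick X with φ X = id
    obtain ⟨X, hX⟩ := hbij.2 (ContinuousLinearMap.id ℂ H)
    have h1 := (hφ (B ∘L X) B X).mp ⟨rfl, by rw [horth]; exact le_top⟩
    have h2 : LinearMap.range (φ X : H →ₗ[ℂ] H) ≤ (LinearMap.ker (φ B : H →ₗ[ℂ] H))ᗮ := h1.2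
    rw [hX, hid] at h2
    exact orth_top_eq_bot _ (top_le_iff.mp h2)
  · intro hB
    have horth : (LinearMap.ker (φ B : H →ₗ[ℂ] H))ᗮ = ⊤ := by
      rw [hB, Submodule.bot_orthogonal_eq_top]
    obtain ⟨A, hA⟩ := hbij.2 (φ B ∘L φ (ContinuousLinearMap.id ℂ H))
    have h1 := (hφ A B (ContinuousLinearMap.id ℂ H)).mpr
      ⟨hA, by rw [horth]; exact le_top⟩
    have h2 : LinearMap.range ((ContinuousLinearMap.id ℂ H : H →L[ℂ] H) : H →ₗ[ℂ] H) ≤ (LinearMap.ker (B : H →ₗ[ℂ] H))ᗮ := h1.2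
    rw [hid] at h2
    exact orth_top_eq_bot _ (top_le_iff.mp h2)
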